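/- (Variable-replication step of the self-avoiding-walk-tree bound.) Let X and Y be finite nonempty types, let n ≥ 1, let ψ_1, …, ψ_n : X × Y → ℝ be nonnegative, and let Φ : Y → ℝ be nonnegative. Suppose that for every j ∈ {1,…,n} and every (x_k)_{k≠j} ∈ X^{n−1}, ∑_{x_j ∈ X} ∑_{y ∈ Y} Φ(y) ∏_{k=1}^n ψ_k(x_k, y) > 0, and that ∑_{x∈X} ∑_{y∈Y} Φ(y) ∏_{j=1}^n ψ_j(x, y) > 0. For each j, define l_j, u_j : X → ℝ as the pointwise infimum and supremum, over all nonzero factorized measures g on X^{n−1} (with coordinates indexed by k ≠ j), of the normalization of the function x ↦ ∑_{(x_k)_{k≠j}} ∑_{y} Φ(y) ψ_j(x, y) (∏_{k≠j} ψ_k(x_k, y)) g((x_k)_{k≠j}). Let P : X → ℝ be the normalization of x ↦ ∑_{y} Φ(y) ∏_{j=1}^n ψ_j(x, y). Then for every x ∈ X, P(x) lies between the infimum and the supremum of N(φ_1 ⋯ φ_n)(x) over all tuples of functions φ_j : X → ℝ with l_j ≤ φ_j ≤ u_j pointwise for each j and with the pointwise product φ_1 ⋯ φ_n nonzero, where N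 denotes normalization. -/

import Mathlib

open Finset

section Aux
variable {X Y : Type*} [Fintype X] [Fintype Y] [DecidableEq X] {n : ℕ}

noncomputable def SA (ψ : Fin n → X × Y → ℝ) (k : Fin n) (y : Y) : ℝ := ∑ x, ψ k (x, y)

noncomputable def TA (ψ : Fin n → X × Y → ℝ) (Φ : Y → ℝ) (m : ℕ) (x : X) : ℝ :=
  ∑ y, Φ y * ∏ k : Fin n, (if (k : ℕ) < m then ψ k (x, y) else SA ψ k y)

noncomputable def GS (j : Fin n) (z : X) : {k : Fin n // k ≠ j} → X → ℝ :=
  fun k w => if (k.1 : ℕ) < (j : ℕ) then (if w = z then 1 else 0) else 1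

lemma GS_nonneg (j : Fin n) (z : X) : ∀ k w, 0 ≤ GS j z k w := by
  intro k w; unfold GS
  split
  · split <;> norm_num
  · norm_num

lemma telescope (f : ℕ → ℝ) :
    ∀ m : ℕ, f 0 ≠ 0 → (∀ j, 0 < j → j < m → f j ≠ 0) →
      ∏ j ∈ range m, (f (j + 1) / f j) = f m / f 0 := by
  intro m h0 hm
  induction m with
  | zero => simp [div_self h0]
  | succ m ih =>
    rw [prod_range_succ, ih (fun j hj hjm => hm j hj (by omega))]
    rcases Nat.eq_zero_or_pos m with hm0 | hm0
    · subst hm0; field_simp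
    · have hfm : f m ≠ 0 := hm m hm0 (by omega)
      field_simp

lemma sum_eq (ψ : Fin n → X × Y → ℝ) (Φ : Y → ℝ) (j : Fin n) (z x0 : X) :
    (∑ xs : {k : Fin n // k ≠ j} → X, ∑ y : Y,
        Φ y * ψ j (x0, y) * (∏ k : {k : Fin n // k ≠ j}, ψ k.1 (xs k, y)) *
          (∏ k, GS j z k (xs k)))
      = ∑ y, Φ y * ψ j (x0, y) *
          ∏ k : {k : Fin n // k ≠ j},
            (if (k.1 : ℕ) < (j : ℕ) then ψ k.1 (z, y) else SA ψ k.1 y) := by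
  rw [Finset.sum_comm]
  refine Finset.sum_congr rfl fun y _ => ?_
  have h1 : ∀ xs : {k : Fin n // k ≠ j} → X,
      Φ y * ψ j (x0, y) * (∏ k : {k : Fin n // k ≠ j}, ψ k.1 (xs k, y)) *
        (∏ k, GS j z k (xs k))
      = Φ y * ψ j (x0, y) * ∏ k : {k : Fin n // k ≠ j},
          (ψ k.1 (xs k, y) * GS j z k (xs k)) := by
    intro xs; rw [Finset.prod_mul_distrib]; ring
  simp only [h1]
  rw [← Finset.mul_sum]
  have h2 : (∑ xs : {k : Fin n // k ≠ j} → X, ∏ k : {k : Fin n // k ≠ j},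
      (ψ k.1 (xs k, y) * GS j z k (xs k)))
      = ∏ k : {k : Fin n // k ≠ j}, ∑ w : X, (ψ k.1 (w, y) * GS j z k w) :=
    (Fintype.prod_sum fun k w => ψ k.1 (w, y) * GS j z k w).symm
  rw [h2]
  congr 1
  refine Finset.prod_congr rfl fun k _ => ?_
  unfold GS
  split
  · simp
  · simp [SA]

lemma prod_split (j : Fin n) (f : Fin n → ℝ) :
    ∏ k : Fin n, f k = f j * ∏ k : {k : Fin n // k ≠ j}, f k.1 := by
  rw [Fintype.prod_eq_mul_prod_compl j f]
  congr 1
  exact (Finset.prod_subtype (p := fun k => k ≠ j) ({j}ᶜ) (by simp) f)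

lemma num_eq (ψ : Fin n → X × Y → ℝ) (Φ : Y → ℝ) (j : Fin n) (z : X) :
    (∑ y, Φ y * ψ j (z, y) *
        ∏ k : {k : Fin n // k ≠ j},
          (if (k.1 : ℕ) < (j : ℕ) then ψ k.1 (z, y) else SA ψ k.1 y))
      = TA ψ Φ ((j : ℕ) + 1) z := by
  unfold TA
  refine Finset.sum_congr rfl fun y _ => ?_
  rw [prod_split j (fun k => if (k : ℕ) < (j : ℕ) + 1 then ψ k (z, y) else SA ψ k y)]
  simp only [Nat.lt_succ_iff, le_refl, if_pos]
  rw [← mul_assoc]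
  congr 1
  refine Finset.prod_congr rfl fun k _ => ?_
  have : (k.1 : ℕ) ≤ (j : ℕ) ↔ (k.1 : ℕ) < (j : ℕ) := by
    constructor
    · intro h; exact lt_of_le_of_ne h (fun he => k.2 (Fin.val_injective he))
    · exact le_of_lt
  simp [this]

lemma den_eq (ψ : Fin n → X × Y → ℝ) (Φ : Y → ℝ) (j : Fin n) (z : X) :
    (∑ x' : X, ∑ y, Φ y * ψ j (x', y) *
        ∏ k : {k : Fin n // k ≠ j},
          (if (k.1 : ℕ) < (j : ℕ) then ψ k.1 (z, y) else SA ψ k.1 y))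
      = TA ψ Φ (j : ℕ) z := by
  rw [Finset.sum_comm]
  unfold TA
  refine Finset.sum_congr rfl fun y _ => ?_
  rw [prod_split j (fun k => if (k : ℕ) < (j : ℕ) then ψ k (z, y) else SA ψ k y)]
  simp only [lt_self_iff_false, if_neg, not_false_iff]
  have key : ∀ (c P : ℝ) (h : X → ℝ), (∑ x', c * h x' * P) = c * ((∑ x', h x') * P) := by
    intro c P h
    rw [← Finset.sum_mul, ← Finset.mul_sum]; ring
  rw [key (Φ y) _ (fun x' => ψ j (x', y))]
  simp only [SA]

lemma TA_zero_eq (ψ : Fin n → X × Y → ℝ) (Φ : Y → ℝ) (z z' : X) :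
    TA ψ Φ 0 z = TA ψ Φ 0 z' := by simp [TA]

lemma TA_n_eq (ψ : Fin n → X × Y → ℝ) (Φ : Y → ℝ) (z : X) :
    TA ψ Φ n z = ∑ y, Φ y * ∏ j, ψ j (z, y) := by
  simp [TA, Fin.is_lt]

lemma TA_pos (ψ : Fin n → X × Y → ℝ) (hψ : ∀ j w, 0 ≤ ψ j w)
    (Φ : Y → ℝ) (hΦ : ∀ y, 0 ≤ Φ y)
    (hpos : ∀ (j : Fin n) (xs : {k : Fin n // k ≠ j} → X),
      0 < ∑ xj : X, ∑ y : Y,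
        Φ y * (ψ j (xj, y) * ∏ k : {k : Fin n // k ≠ j}, ψ k.1 (xs k, y)))
    (m : ℕ) (hm : m < n) (z : X) : 0 < TA ψ Φ m z := by
  set jm : Fin n := ⟨m, hm⟩
  have h := hpos jm (fun _ => z)
  have heq : (∑ xj : X, ∑ y : Y,
      Φ y * (ψ jm (xj, y) * ∏ k : {k : Fin n // k ≠ jm}, ψ k.1 (z, y)))
      = ∑ y, Φ y * (SA ψ jm y * ∏ k : {k : Fin n // k ≠ jm}, ψ k.1 (z, y)) := by
    rw [Finset.sum_comm]
    refine Finset.sum_congr rfl fun y _ => ?_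
    have key : ∀ (c P : ℝ) (h : X → ℝ), (∑ x', c * (h x' * P)) = c * ((∑ x', h x') * P) := by
      intro c P h
      simp only [← mul_assoc]
      rw [← Finset.sum_mul, ← Finset.mul_sum]
    rw [key (Φ y) _ (fun x' => ψ jm (x', y))]
    simp only [SA]
  rw [heq] at h
  refine lt_of_lt_of_le h ?_
  unfold TA
  refine Finset.sum_le_sum fun y _ => ?_
  refine mul_le_mul_of_nonneg_left ?_ (hΦ y)
  have hsplit := prod_split jm
      (fun k => if (k : ℕ) < m then ψ k (z, y) else SA ψ k y)
  rw [hsplit]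
  rw [if_neg (show ¬ ((jm : ℕ) < m) from lt_irrefl m)]
  show SA ψ jm y * _ ≤ SA ψ jm y * _
  refine mul_le_mul_of_nonneg_left ?_ ?_
  · refine Finset.prod_le_prod (fun k _ => hψ k.1 _) fun k _ => ?_
    split
    · exact le_refl _
    · exact Finset.single_le_sum (fun x' _ => hψ k.1 (x', y)) (Finset.mem_univ z)
  · exact Finset.sum_nonneg fun x' _ => hψ jm (x', y)

end Aux


set_option maxHeartbeats 1000000 in
/-- Variable-replication step of the self-avoiding-walk-tree bound: the marginal
`P` of the variable `x` (with neighboring factors `ψ 1, …, ψ n` and cavity term `Φ`)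
lies between the extrema of normalized pointwise products `N(φ 1 ⋯ φ n)` where
each `φ j` ranges over the box `B[l j, u j]` and the product is nonzero. -/
theorem stmt_17 {X Y : Type*} [Fintype X] [Nonempty X] [Fintype Y] [Nonempty Y]
    {n : ℕ} (hn : 1 ≤ n)
    (ψ : Fin n → X × Y → ℝ) (hψ : ∀ j z, 0 ≤ ψ j z)
    (Φ : Y → ℝ) (hΦ : ∀ y, 0 ≤ Φ y)
    (hpos : ∀ (j : Fin n) (xs : {k : Fin n // k ≠ j} → X),
      0 < ∑ xj : X, ∑ y : Y,
        Φ y * (ψ j (xj, y) * ∏ k : {k : Fin n // k ≠ j}, ψ k.1 (xs k, y)))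
    (hpos' : 0 < ∑ x : X, ∑ y : Y, Φ y * ∏ j, ψ j (x, y))
    (l u : Fin n → X → ℝ)
    (hl : ∀ (j : Fin n) (x : X),
      IsGLB {r : ℝ | ∃ g : ({k : Fin n // k ≠ j} → X) → ℝ,
          (∃ gs : {k : Fin n // k ≠ j} → X → ℝ,
            (∀ k z, 0 ≤ gs k z) ∧ g = fun xs => ∏ k, gs k (xs k)) ∧
          (∃ xs, 0 < g xs) ∧
          r = (∑ xs : {k : Fin n // k ≠ j} → X, ∑ y : Y,
                Φ y * ψ j (x, y) * (∏ k : {k : Fin n // k ≠ j}, ψ k.1 (xs k, y)) * g xs)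
              / ∑ x' : X, ∑ xs : {k : Fin n // k ≠ j} → X, ∑ y : Y,
                Φ y * ψ j (x', y) * (∏ k : {k : Fin n // k ≠ j}, ψ k.1 (xs k, y)) * g xs}
        (l j x))
    (hu : ∀ (j : Fin n) (x : X),
      IsLUB {r : ℝ | ∃ g : ({k : Fin n // k ≠ j} → X) → ℝ,
          (∃ gs : {k : Fin n // k ≠ j} → X → ℝ,
            (∀ k z, 0 ≤ gs k z) ∧ g = fun xs => ∏ k, gs k (xs k)) ∧
          (∃ xs, 0 < g xs) ∧
          r = (∑ xs : {k : Fin n // k ≠ j} → X, ∑ y : Y,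
                Φ y * ψ j (x, y) * (∏ k : {k : Fin n // k ≠ j}, ψ k.1 (xs k, y)) * g xs)
              / ∑ x' : X, ∑ xs : {k : Fin n // k ≠ j} → X, ∑ y : Y,
                Φ y * ψ j (x', y) * (∏ k : {k : Fin n // k ≠ j}, ψ k.1 (xs k, y)) * g xs}
        (u j x)) :
    ∀ x : X,
      sInf {r : ℝ | ∃ φ : Fin n → X → ℝ,
          (∀ j z, l j z ≤ φ j z ∧ φ j z ≤ u j z) ∧
          (∃ z, (∏ j, φ j z) ≠ 0) ∧
          r = (∏ j, φ j x) / ∑ z, ∏ j, φ j z}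
        ≤ (∑ y : Y, Φ y * ∏ j, ψ j (x, y))
          / (∑ x' : X, ∑ y : Y, Φ y * ∏ j, ψ j (x', y)) ∧
      (∑ y : Y, Φ y * ∏ j, ψ j (x, y))
          / (∑ x' : X, ∑ y : Y, Φ y * ∏ j, ψ j (x', y))
        ≤ sSup {r : ℝ | ∃ φ : Fin n → X → ℝ,
          (∀ j z, l j z ≤ φ j z ∧ φ j z ≤ u j z) ∧
          (∃ z, (∏ j, φ j z) ≠ 0) ∧
          r = (∏ j, φ j x) / ∑ z, ∏ j, φ j z} := by
  classical
  intro x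
  have hn0 : 0 < n := hn
  have hTpos : ∀ m, m < n → ∀ z : X, 0 < TA ψ Φ m z :=
    fun m hm z => TA_pos ψ hψ Φ hΦ hpos m hm z
  -- the candidate φ
  set Ph : Fin n → X → ℝ := fun j z => TA ψ Φ ((j : ℕ) + 1) z / TA ψ Φ (j : ℕ) z with hPh
  -- nonnegativity of elements of the ratio sets
  have hsetnn : ∀ (j : Fin n) (z : X) (r : ℝ),
      r ∈ {r : ℝ | ∃ g : ({k : Fin n // k ≠ j} → X) → ℝ,
          (∃ gs : {k : Fin n // k ≠ j} → X → ℝ,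
            (∀ k z, 0 ≤ gs k z) ∧ g = fun xs => ∏ k, gs k (xs k)) ∧
          (∃ xs, 0 < g xs) ∧
          r = (∑ xs : {k : Fin n // k ≠ j} → X, ∑ y : Y,
                Φ y * ψ j (z, y) * (∏ k : {k : Fin n // k ≠ j}, ψ k.1 (xs k, y)) * g xs)
              / ∑ x' : X, ∑ xs : {k : Fin n // k ≠ j} → X, ∑ y : Y,
                Φ y * ψ j (x', y) * (∏ k : {k : Fin n // k ≠ j}, ψ k.1 (xs k, y)) * g xs} →
      0 ≤ r := by
    rintro j z r ⟨g, ⟨gs, hgs, rfl⟩, -, rfl⟩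
    have t1 : ∀ x0 : X, 0 ≤ ∑ xs : {k : Fin n // k ≠ j} → X, ∑ y : Y,
        Φ y * ψ j (x0, y) * (∏ k : {k : Fin n // k ≠ j}, ψ k.1 (xs k, y)) *
          (fun xs => ∏ k, gs k (xs k)) xs := by
      intro x0
      refine Finset.sum_nonneg fun xs _ => Finset.sum_nonneg fun y _ => ?_
      refine mul_nonneg (mul_nonneg (mul_nonneg (hΦ y) (hψ j _)) ?_) ?_
      · exact Finset.prod_nonneg fun k _ => hψ k.1 _
      · exact Finset.prod_nonneg fun k _ => hgs k _
    exact div_nonneg (t1 z) (Finset.sum_nonneg fun x' _ => t1 x')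
  have hl0 : ∀ (j : Fin n) (z : X), 0 ≤ l j z :=
    fun j z => (hl j z).2 (fun r hr => hsetnn j z r hr)
  -- membership of Ph j z in the ratio set
  have hbox : ∀ (j : Fin n) (z : X), l j z ≤ Ph j z ∧ Ph j z ≤ u j z := by
    intro j z
    have hmem : Ph j z ∈ {r : ℝ | ∃ g : ({k : Fin n // k ≠ j} → X) → ℝ,
          (∃ gs : {k : Fin n // k ≠ j} → X → ℝ,
            (∀ k z, 0 ≤ gs k z) ∧ g = fun xs => ∏ k, gs k (xs k)) ∧
          (∃ xs, 0 < g xs) ∧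
          r = (∑ xs : {k : Fin n // k ≠ j} → X, ∑ y : Y,
                Φ y * ψ j (z, y) * (∏ k : {k : Fin n // k ≠ j}, ψ k.1 (xs k, y)) * g xs)
              / ∑ x' : X, ∑ xs : {k : Fin n // k ≠ j} → X, ∑ y : Y,
                Φ y * ψ j (x', y) * (∏ k : {k : Fin n // k ≠ j}, ψ k.1 (xs k, y)) * g xs} := by
      refine ⟨fun xs => ∏ k, GS j z k (xs k), ⟨GS j z, GS_nonneg j z, rfl⟩,
        ⟨fun _ => z, ?_⟩, ?_⟩
      · refine Finset.prod_pos fun k _ => ?_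
        unfold GS; split
        · simp
        · norm_num
      · have hd : (∑ x' : X, ∑ xs : {k : Fin n // k ≠ j} → X, ∑ y : Y,
            Φ y * ψ j (x', y) * (∏ k : {k : Fin n // k ≠ j}, ψ k.1 (xs k, y)) *
              (∏ k, GS j z k (xs k))) = TA ψ Φ (j : ℕ) z := by
          rw [← den_eq ψ Φ j z]
          exact Finset.sum_congr rfl fun x' _ => sum_eq ψ Φ j z x'
        show Ph j z = (∑ xs : {k : Fin n // k ≠ j} → X, ∑ y : Y,
            Φ y * ψ j (z, y) * (∏ k : {k : Fin n // k ≠ j}, ψ k.1 (xs k, y)) *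
              (∏ k, GS j z k (xs k))) / _
        rw [hd, sum_eq ψ Φ j z z, num_eq ψ Φ j z]
    exact ⟨(hl j z).1 hmem, (hu j z).1 hmem⟩
  -- telescoping product
  have hprod : ∀ z : X, (∏ j, Ph j z) = TA ψ Φ n z / TA ψ Φ 0 z := by
    intro z
    have h := Fin.prod_univ_eq_prod_range (fun i => TA ψ Φ (i + 1) z / TA ψ Φ i z) n
    calc (∏ j, Ph j z) = ∏ i ∈ Finset.range n, (TA ψ Φ (i + 1) z / TA ψ Φ i z) := h
      _ = TA ψ Φ n z / TA ψ Φ 0 z :=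
        telescope (fun i => TA ψ Φ i z) n (ne_of_gt (hTpos 0 hn0 z))
          (fun jj _ h2 => ne_of_gt (hTpos jj h2 z))
  have hT0 : ∀ z : X, TA ψ Φ 0 z = TA ψ Φ 0 x := fun z => TA_zero_eq ψ Φ z x
  have hT0pos : 0 < TA ψ Φ 0 x := hTpos 0 hn0 x
  have hsum : (∑ z, ∏ j, Ph j z) = (∑ z, TA ψ Φ n z) / TA ψ Φ 0 x := by
    rw [Finset.sum_div]
    exact Finset.sum_congr rfl fun z _ => by rw [hprod z, hT0 z]
  -- nonzero witness
  obtain ⟨z0, hz0⟩ : ∃ z0 : X, 0 < TA ψ Φ n z0 := by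
    by_contra h
    push_neg at h
    have : (∑ z, TA ψ Φ n z) ≤ 0 := Finset.sum_nonpos fun z _ => h z
    have h2 : (∑ z : X, TA ψ Φ n z) = ∑ x : X, ∑ y : Y, Φ y * ∏ j, ψ j (x, y) :=
      Finset.sum_congr rfl fun z _ => TA_n_eq ψ Φ z
    rw [h2] at this
    linarith [hpos']
  have hsumTA : (∑ z : X, TA ψ Φ n z) = ∑ x' : X, ∑ y : Y, Φ y * ∏ j, ψ j (x', y) :=
    Finset.sum_congr rfl fun z _ => TA_n_eq ψ Φ z
  -- membership of the target value in the main set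
  have hmemP : (∑ y : Y, Φ y * ∏ j, ψ j (x, y))
      / (∑ x' : X, ∑ y : Y, Φ y * ∏ j, ψ j (x', y))
      ∈ {r : ℝ | ∃ φ : Fin n → X → ℝ,
          (∀ j z, l j z ≤ φ j z ∧ φ j z ≤ u j z) ∧
          (∃ z, (∏ j, φ j z) ≠ 0) ∧
          r = (∏ j, φ j x) / ∑ z, ∏ j, φ j z} := by
    refine ⟨Ph, hbox, ⟨z0, ?_⟩, ?_⟩
    · rw [hprod z0]
      exact ne_of_gt (div_pos hz0 (hT0 z0 ▸ hT0pos))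
    · rw [hprod x, hsum, hT0 x, div_div_div_cancel_right₀ (ne_of_gt hT0pos),
        TA_n_eq ψ Φ x, hsumTA]
  -- bounds for the main set
  have hlb : ∀ r ∈ {r : ℝ | ∃ φ : Fin n → X → ℝ,
      (∀ j z, l j z ≤ φ j z ∧ φ j z ≤ u j z) ∧
      (∃ z, (∏ j, φ j z) ≠ 0) ∧
      r = (∏ j, φ j x) / ∑ z, ∏ j, φ j z}, 0 ≤ r ∧ r ≤ 1 := by
    rintro r ⟨f, hf, ⟨z1, hz1⟩, rfl⟩
    have h0 : ∀ z : X, 0 ≤ ∏ j, f j z :=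
      fun z => Finset.prod_nonneg fun j _ => le_trans (hl0 j z) (hf j z).1
    have hz : 0 < ∏ j, f j z1 := lt_of_le_of_ne (h0 z1) (Ne.symm hz1)
    have hden : 0 < ∑ z, ∏ j, f j z :=
      Finset.sum_pos' (fun z _ => h0 z) ⟨z1, Finset.mem_univ z1, hz⟩
    constructor
    · exact div_nonneg (h0 x) (le_of_lt hden)
    · rw [div_le_one hden]
      exact Finset.single_le_sum (fun z _ => h0 z) (Finset.mem_univ x)
  constructor
  · exact csInf_le ⟨0, fun r hr => (hlb r hr).1⟩ hmemP
  · exact le_csSup ⟨1, fun r hr => (hlb r hr).2⟩ hmemP
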